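/- For natural numbers $k \neq k'$, the ordered sets $P_k$ and $P_{k'}$ are not order-isomorphic, where $P_k = \{t \in [0,1]^{2^{\{1,\dots,k\}}} : \sum_a t_a = 1\}$ is ordered by $t \leq s$ iff $\sum_{a \in \mathcal{A}} t_a \leq \sum_{a \in \mathcal{A}} s_a$ for every upwards closed family $\mathcal{A}$ of subsets of $\{1,\dots,k\}$. -/

import Mathlib

/-- The underlying set of `P_k`. -/
def PkSet (k : ℕ) : Set (Finset (Fin k) → ℝ) :=
  {t | (∀ a, t a ∈ Set.Icc (0 : ℝ) 1) ∧ (∑ a : Finset (Fin k), t a) = 1}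

/-- A family of subsets of `{1,…,k}` is upwards closed. -/
def UpClosed {k : ℕ} (𝒜 : Finset (Finset (Fin k))) : Prop :=
  ∀ a ∈ 𝒜, ∀ b : Finset (Fin k), a ⊆ b → b ∈ 𝒜

/-- The order on `P_k`. -/
def PkLe {k : ℕ} (t s : ↥(PkSet k)) : Prop :=
  ∀ 𝒜 : Finset (Finset (Fin k)), UpClosed 𝒜 →
    (∑ a ∈ 𝒜, t.1 a) ≤ ∑ a ∈ 𝒜, s.1 a

namespace Stmt5Aux

variable {k : ℕ}

/-- Dirac delta at a subset. -/
def dlt (a : Finset (Fin k)) : Finset (Fin k) → ℝ := fun b => if b = a then 1 else 0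

lemma sum_dlt (a : Finset (Fin k)) (𝒜 : Finset (Finset (Fin k))) :
    ∑ b ∈ 𝒜, dlt a b = if a ∈ 𝒜 then 1 else 0 := by
  simp [dlt, Finset.sum_ite_eq']

lemma dlt_mem (a : Finset (Fin k)) : dlt a ∈ PkSet k := by
  constructor
  · intro b; unfold dlt; split <;> norm_num
  · rw [sum_dlt]; simp

/-- The maximal elements of `H`. -/
def E (i : Fin k) : ↥(PkSet k) := ⟨dlt {i}, dlt_mem _⟩

/-- The up-set of a subset. -/
def up (a : Finset (Fin k)) : Finset (Finset (Fin k)) :=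
  Finset.univ.filter (fun b => a ⊆ b)

lemma mem_up {a b : Finset (Fin k)} : b ∈ up a ↔ a ⊆ b := by simp [up]

lemma upClosed_up (a : Finset (Fin k)) : UpClosed (up a) := fun _ hb _ hbc =>
  mem_up.2 ((mem_up.1 hb).trans hbc)

lemma F_le_one {t : Finset (Fin k) → ℝ} (ht : t ∈ PkSet k) (𝒜 : Finset (Finset (Fin k))) :
    ∑ a ∈ 𝒜, t a ≤ 1 := by
  rw [← ht.2]
  exact Finset.sum_le_sum_of_subset_of_nonneg (Finset.subset_univ _)
    (fun i _ _ => (ht.1 i).1)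

lemma pair_le_one {t : Finset (Fin k) → ℝ} (ht : t ∈ PkSet k) {a b : Finset (Fin k)}
    (hab : a ≠ b) : t a + t b ≤ 1 := by
  have := F_le_one ht {a, b}
  rwa [Finset.sum_pair hab] at this

/-- Moving the mass of `a` to `b`. -/
def mv (t : Finset (Fin k) → ℝ) (a b : Finset (Fin k)) : Finset (Fin k) → ℝ :=
  fun c => t c + t a * ((if c = b then (1:ℝ) else 0) - (if c = a then 1 else 0))

lemma F_mv (t : Finset (Fin k) → ℝ) (a b : Finset (Fin k)) (𝒜 : Finset (Finset (Fin k))) :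
    ∑ c ∈ 𝒜, mv t a b c =
      (∑ c ∈ 𝒜, t c) + t a * ((if b ∈ 𝒜 then (1:ℝ) else 0) - (if a ∈ 𝒜 then 1 else 0)) := by
  unfold mv
  rw [Finset.sum_add_distrib, ← Finset.mul_sum, Finset.sum_sub_distrib,
    Finset.sum_ite_eq' 𝒜 b (fun _ => (1:ℝ)), Finset.sum_ite_eq' 𝒜 a (fun _ => (1:ℝ))]

lemma mv_mem {t : Finset (Fin k) → ℝ} (ht : t ∈ PkSet k) {a b : Finset (Fin k)}
    (hab : a ≠ b) : mv t a b ∈ PkSet k := by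
  constructor
  · intro c
    unfold mv
    rcases eq_or_ne c b with rfl | hcb
    · rw [if_pos rfl, if_neg (Ne.symm hab)]
      have h1 := (ht.1 c).1
      have h2 := (ht.1 a).1
      have h3 := pair_le_one ht hab
      constructor <;> [nlinarith; nlinarith]
    · rcases eq_or_ne c a with rfl | hca
      · rw [if_neg hcb, if_pos rfl]
        constructor <;> nlinarith
      · rw [if_neg hcb, if_neg hca]
        have := ht.1 c
        constructor <;> [nlinarith [this.1]; nlinarith [this.2]]
  · rw [F_mv]
    simp [ht.2]

lemma mv_le {t : Finset (Fin k) → ℝ} (ht : t ∈ PkSet k) {a b : Finset (Fin k)}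
    (hab : a ≠ b) (hba : b ⊆ a) :
    PkLe ⟨mv t a b, mv_mem ht hab⟩ ⟨t, ht⟩ := by
  intro 𝒜 h𝒜
  show ∑ c ∈ 𝒜, mv t a b c ≤ ∑ c ∈ 𝒜, t c
  rw [F_mv]
  have hta := (ht.1 a).1
  by_cases hb : b ∈ 𝒜
  · have ha : a ∈ 𝒜 := h𝒜 b hb a hba
    simp [hb, ha]
  · rw [if_neg hb]
    by_cases ha : a ∈ 𝒜
    · rw [if_pos ha]; nlinarith
    · rw [if_neg ha]; simp

/-- The downset of `t` is a chain. -/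
def ChainDown (t : ↥(PkSet k)) : Prop :=
  ∀ s₁ s₂ : ↥(PkSet k), PkLe s₁ t → PkLe s₂ t → PkLe s₁ s₂ ∨ PkLe s₂ s₁

/-- `t` is a maximal element of `H` (up to order-equivalence). -/
def MaxChain (t : ↥(PkSet k)) : Prop :=
  ChainDown t ∧ ∀ s, ChainDown s → PkLe t s → PkLe s t

lemma le_E_support {s : ↥(PkSet k)} {i : Fin k} (h : PkLe s (E i)) :
    ∀ a, a ≠ ∅ → a ≠ {i} → s.1 a = 0 := by
  intro a h1 h2
  have hii : ({i} : Finset (Fin k)) ∉ up a := by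
    rw [mem_up]; intro hsub
    rcases Finset.subset_singleton_iff.1 hsub with h | h
    · exact h1 h
    · exact h2 h
  have key := h (up a) (upClosed_up a)
  have hE : ∑ b ∈ up a, (E i).1 b = 0 := by
    show ∑ b ∈ up a, dlt {i} b = 0
    rw [sum_dlt]; simp [hii]
  have hle : s.1 a ≤ ∑ b ∈ up a, s.1 b :=
    Finset.single_le_sum (fun b _ => (s.2.1 b).1) (mem_up.2 (Finset.Subset.refl a))
  have := (s.2.1 a).1
  rw [hE] at key
  linarith

lemma support_sum {t : Finset (Fin k) → ℝ} (ht : t ∈ PkSet k) {c : Finset (Fin k)}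
    (hc : c ≠ ∅) (hsupp : ∀ a, a ≠ ∅ → a ≠ c → t a = 0) : t ∅ + t c = 1 := by
  have key : ∑ a ∈ ({∅, c} : Finset (Finset (Fin k))), t a = ∑ a : Finset (Fin k), t a := by
    apply Finset.sum_subset (Finset.subset_univ _)
    intro x _ hx
    simp only [Finset.mem_insert, Finset.mem_singleton] at hx
    push_neg at hx
    exact hsupp x hx.1.ne_empty hx.2
  rw [Finset.sum_pair (Ne.symm hc)] at key
  rw [key, ht.2]

lemma support_F {t : Finset (Fin k) → ℝ} {c : Finset (Fin k)} (hc : c ≠ ∅)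
    (hsupp : ∀ a, a ≠ ∅ → a ≠ c → t a = 0) (𝒜 : Finset (Finset (Fin k))) :
    ∑ a ∈ 𝒜, t a = (if ∅ ∈ 𝒜 then t ∅ else 0) + (if c ∈ 𝒜 then t c else 0) := by
  have congrLem : ∀ a ∈ 𝒜, t a =
      (if a = ∅ then t ∅ else 0) + (if a = c then t c else 0) := by
    intro a _
    rcases eq_or_ne a ∅ with rfl | h1
    · simp [Ne.symm hc]
    rcases eq_or_ne a c with rfl | h2
    · simp [hc]
    · simp [h1, h2, hsupp a h1 h2]
  rw [Finset.sum_congr rfl congrLem, Finset.sum_add_distrib,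
    Finset.sum_ite_eq' 𝒜 (∅ : Finset (Fin k)) (fun _ => t ∅),
    Finset.sum_ite_eq' 𝒜 c (fun _ => t c)]

lemma two_point_le {s₁ s₂ : ↥(PkSet k)} {i : Fin k}
    (h1 : ∀ a, a ≠ ∅ → a ≠ {i} → s₁.1 a = 0)
    (h2 : ∀ a, a ≠ ∅ → a ≠ {i} → s₂.1 a = 0)
    (h : s₁.1 {i} ≤ s₂.1 {i}) : PkLe s₁ s₂ := by
  intro 𝒜 h𝒜
  have hi : ({i} : Finset (Fin k)) ≠ ∅ := Finset.singleton_ne_empty i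
  rw [support_F hi h1 𝒜, support_F hi h2 𝒜]
  by_cases hiA : ({i} : Finset (Fin k)) ∈ 𝒜
  · by_cases heA : (∅ : Finset (Fin k)) ∈ 𝒜
    · have e1 := support_sum s₁.2 hi h1
      have e2 := support_sum s₂.2 hi h2
      simp only [hiA, heA, if_pos]
      linarith
    · simp [hiA, heA, h]
  · have heA : (∅ : Finset (Fin k)) ∉ 𝒜 := fun he =>
      hiA (h𝒜 ∅ he _ (Finset.empty_subset _))
    simp [hiA, heA]

lemma chainDown_E (i : Fin k) : ChainDown (E i) := by
  intro s₁ s₂ hs₁ hs₂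
  rcases le_total (s₁.1 {i}) (s₂.1 {i}) with h | h
  · exact Or.inl (two_point_le (le_E_support hs₁) (le_E_support hs₂) h)
  · exact Or.inr (two_point_le (le_E_support hs₂) (le_E_support hs₁) h)

lemma E_le_E {i j : Fin k} (h : PkLe (E i) (E j)) : i = j := by
  have key := h (up {i}) (upClosed_up _)
  have l1 : ∑ b ∈ up {i}, (E i).1 b = 1 := by
    show ∑ b ∈ up {i}, dlt {i} b = 1
    rw [sum_dlt]; simp [mem_up]
  have l2 : ∑ b ∈ up {i}, (E j).1 b = if ({j} : Finset (Fin k)) ∈ up {i} then 1 else 0 :=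
    sum_dlt _ _
  rw [l1, l2] at key
  by_contra hij
  have : ({j} : Finset (Fin k)) ∉ up {i} := by
    rw [mem_up, Finset.singleton_subset_singleton]
    exact hij
  rw [if_neg this] at key
  linarith

lemma chain_le_E (hk : 0 < k) (t : ↥(PkSet k)) (hch : ChainDown t) :
    ∃ i, PkLe t (E i) := by
  by_cases hA : ∃ a : Finset (Fin k), 0 < t.1 a ∧ 2 ≤ a.card
  · exfalso
    obtain ⟨a, hta, hcard⟩ := hA
    obtain ⟨i, hi, j, hj, hij⟩ := Finset.one_lt_card.1 hcard
    have hai : a ≠ {i} := by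
      rintro rfl; simp at hcard
    have haj : a ≠ {j} := by
      rintro rfl; simp at hcard
    set s₁ : ↥(PkSet k) := ⟨mv t.1 a {i}, mv_mem t.2 hai⟩ with hs₁
    set s₂ : ↥(PkSet k) := ⟨mv t.1 a {j}, mv_mem t.2 haj⟩ with hs₂
    have hle₁ : PkLe s₁ t := mv_le t.2 hai (Finset.singleton_subset_iff.2 hi)
    have hle₂ : PkLe s₂ t := mv_le t.2 haj (Finset.singleton_subset_iff.2 hj)
    have comp : ∀ (u v : Fin k), u ∈ a → ¬ ({v} : Finset (Fin k)) ∈ up {u} → u ≠ v →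
        ¬ PkLe (⟨mv t.1 a {u}, mv_mem t.2 (by rintro rfl; simp at hcard)⟩ : ↥(PkSet k))
          ⟨mv t.1 a {v}, mv_mem t.2 (by rintro rfl; simp at hcard)⟩ := by
      intro u v hu hv huv hle
      have key := hle (up {u}) (upClosed_up _)
      rw [show ((⟨mv t.1 a {u}, _⟩ : ↥(PkSet k)) : ↥(PkSet k)).1 = mv t.1 a {u} from rfl] at key
      rw [show ((⟨mv t.1 a {v}, _⟩ : ↥(PkSet k)) : ↥(PkSet k)).1 = mv t.1 a {v} from rfl] at key
      rw [F_mv, F_mv] at key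
      have hau : a ∈ up {u} := mem_up.2 (Finset.singleton_subset_iff.2 hu)
      have huu : ({u} : Finset (Fin k)) ∈ up {u} := mem_up.2 (Finset.Subset.refl _)
      rw [if_pos hau, if_pos huu, if_neg hv] at key
      linarith
    have hvij : ({j} : Finset (Fin k)) ∉ up {i} := by
      rw [mem_up, Finset.singleton_subset_singleton]; exact hij
    have hvji : ({i} : Finset (Fin k)) ∉ up {j} := by
      rw [mem_up, Finset.singleton_subset_singleton]; exact Ne.symm hij
    rcases hch s₁ s₂ hle₁ hle₂ with hc | hc
    · exact comp i j hi hvij hij hc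
    · exact comp j i hj hvji (Ne.symm hij) hc
  push_neg at hA
  by_cases hB : ∃ i j : Fin k, i ≠ j ∧ 0 < t.1 {i} ∧ 0 < t.1 {j}
  · exfalso
    obtain ⟨i, j, hij, hti, htj⟩ := hB
    have hne : ∀ u : Fin k, ({u} : Finset (Fin k)) ≠ ∅ := fun u => Finset.singleton_ne_empty u
    set s₁ : ↥(PkSet k) := ⟨mv t.1 {i} ∅, mv_mem t.2 (hne i)⟩ with hs₁
    set s₂ : ↥(PkSet k) := ⟨mv t.1 {j} ∅, mv_mem t.2 (hne j)⟩ with hs₂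
    have hle₁ : PkLe s₁ t := mv_le t.2 (hne i) (Finset.empty_subset _)
    have hle₂ : PkLe s₂ t := mv_le t.2 (hne j) (Finset.empty_subset _)
    have comp : ∀ u v : Fin k, u ≠ v → 0 < t.1 {v} →
        ¬ PkLe (⟨mv t.1 {u} ∅, mv_mem t.2 (hne u)⟩ : ↥(PkSet k))
          ⟨mv t.1 {v} ∅, mv_mem t.2 (hne v)⟩ := by
      intro u v huv htv hle
      have key := hle (up {v}) (upClosed_up _)
      rw [show ((⟨mv t.1 {u} ∅, _⟩ : ↥(PkSet k)) : ↥(PkSet k)).1 = mv t.1 {u} ∅ from rfl] at key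
      rw [show ((⟨mv t.1 {v} ∅, _⟩ : ↥(PkSet k)) : ↥(PkSet k)).1 = mv t.1 {v} ∅ from rfl] at key
      rw [F_mv, F_mv] at key
      have h0 : (∅ : Finset (Fin k)) ∉ up {v} := by
        rw [mem_up]; simp
      have hu : ({u} : Finset (Fin k)) ∉ up {v} := by
        rw [mem_up, Finset.singleton_subset_singleton]; exact Ne.symm huv
      have hv : ({v} : Finset (Fin k)) ∈ up {v} := mem_up.2 (Finset.Subset.refl _)
      rw [if_neg h0, if_neg hu, if_pos hv] at key
      linarith
    rcases hch s₁ s₂ hle₁ hle₂ with hc | hc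
    · exact comp i j hij htj hc
    · exact comp j i (Ne.symm hij) hti hc
  push_neg at hB
  -- pick the index i
  obtain ⟨i, hiprop⟩ : ∃ i : Fin k, ∀ j : Fin k, j ≠ i → t.1 {j} ≤ 0 := by
    by_cases hC : ∃ i : Fin k, 0 < t.1 {i}
    · obtain ⟨i, hi⟩ := hC
      refine ⟨i, fun j hj => ?_⟩
      by_contra hpos
      push_neg at hpos
      exact absurd hpos (not_lt.2 (hB i j (Ne.symm hj) hi))
    · push_neg at hC
      exact ⟨⟨0, hk⟩, fun j _ => hC j⟩
  refine ⟨i, ?_⟩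
  have hsupp : ∀ a, a ≠ ∅ → a ≠ ({i} : Finset (Fin k)) → t.1 a = 0 := by
    intro a ha hai
    by_contra h0
    have hpos : 0 < t.1 a := lt_of_le_of_ne ((t.2.1 a).1) (Ne.symm h0)
    have hc1 : a.card ≤ 1 := by
      by_contra hc
      push_neg at hc
      exact absurd (hA a hpos) (by omega)
    have hc2 : a.card = 1 := by
      have : a.Nonempty := Finset.nonempty_iff_ne_empty.2 ha
      have := Finset.card_pos.2 this
      omega
    obtain ⟨j, rfl⟩ := Finset.card_eq_one.1 hc2
    have hji : j ≠ i := fun h => hai (by rw [h])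
    exact absurd hpos (not_lt.2 (hiprop j hji))
  intro 𝒜 h𝒜
  have hi : ({i} : Finset (Fin k)) ≠ ∅ := Finset.singleton_ne_empty i
  rw [support_F hi hsupp 𝒜]
  have hE : ∑ a ∈ 𝒜, (E i).1 a = if ({i} : Finset (Fin k)) ∈ 𝒜 then 1 else 0 := sum_dlt _ _
  rw [hE]
  have h0 := (t.2.1 (∅ : Finset (Fin k))).1
  have h1 := (t.2.1 ({i} : Finset (Fin k))).1
  have hsum := support_sum t.2 hi hsupp
  by_cases hiA : ({i} : Finset (Fin k)) ∈ 𝒜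
  · by_cases heA : (∅ : Finset (Fin k)) ∈ 𝒜
    · simp only [hiA, heA, if_pos]; linarith
    · simp only [hiA, heA, if_pos, if_neg, not_false_iff]; linarith
  · have heA : (∅ : Finset (Fin k)) ∉ 𝒜 := fun he =>
      hiA (h𝒜 ∅ he _ (Finset.empty_subset _))
    simp [hiA, heA]

lemma maxChain_E (hk : 0 < k) (i : Fin k) : MaxChain (E i) := by
  refine ⟨chainDown_E i, fun s hs hle => ?_⟩
  obtain ⟨j, hj⟩ := chain_le_E hk s hs
  have hij : i = j := E_le_E (fun 𝒜 h𝒜 => le_trans (hle 𝒜 h𝒜) (hj 𝒜 h𝒜))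
  rw [hij]
  exact hj

variable {k' : ℕ}

lemma chainDown_map (e : ↥(PkSet k) ≃ ↥(PkSet k'))
    (he : ∀ t s, PkLe t s ↔ PkLe (e t) (e s)) {t : ↥(PkSet k)} (h : ChainDown t) :
    ChainDown (e t) := by
  intro s₁ s₂ h₁ h₂
  have h₁' : PkLe (e.symm s₁) t := by
    rw [he (e.symm s₁) t, e.apply_symm_apply]; exact h₁
  have h₂' : PkLe (e.symm s₂) t := by
    rw [he (e.symm s₂) t, e.apply_symm_apply]; exact h₂
  rcases h (e.symm s₁) (e.symm s₂) h₁' h₂' with hc | hc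
  · left
    have := (he _ _).1 hc
    rwa [e.apply_symm_apply, e.apply_symm_apply] at this
  · right
    have := (he _ _).1 hc
    rwa [e.apply_symm_apply, e.apply_symm_apply] at this

lemma maxChain_map (e : ↥(PkSet k) ≃ ↥(PkSet k'))
    (he : ∀ t s, PkLe t s ↔ PkLe (e t) (e s)) {t : ↥(PkSet k)} (h : MaxChain t) :
    MaxChain (e t) := by
  have he' : ∀ t s, PkLe t s ↔ PkLe (e.symm t) (e.symm s) := fun t s => by
    rw [he (e.symm t) (e.symm s), e.apply_symm_apply, e.apply_symm_apply]
  refine ⟨chainDown_map e he h.1, fun s hs hts => ?_⟩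
  have hs' : ChainDown (e.symm s) := chainDown_map e.symm he' hs
  have hts' : PkLe t (e.symm s) := by
    rw [he t (e.symm s), e.apply_symm_apply]; exact hts
  have := h.2 (e.symm s) hs' hts'
  have := (he _ _).1 this
  rwa [e.apply_symm_apply] at this

lemma card_le (hk : 0 < k) (hk' : 0 < k')
    (e : ↥(PkSet k) ≃ ↥(PkSet k'))
    (he : ∀ t s, PkLe t s ↔ PkLe (e t) (e s)) : k ≤ k' := by
  have key : ∀ i : Fin k, ∃ j : Fin k', PkLe (e (E i)) (E j) ∧ PkLe (E j) (e (E i)) := by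
    intro i
    have hm : MaxChain (e (E i)) := maxChain_map e he (maxChain_E hk i)
    obtain ⟨j, hj⟩ := chain_le_E hk' _ hm.1
    exact ⟨j, hj, hm.2 _ (chainDown_E j) hj⟩
  choose φ h1 h2 using key
  have hinj : Function.Injective φ := by
    intro i₁ i₂ hEq
    have h2' := h2 i₂
    rw [← hEq] at h2'
    have hle : PkLe (e (E i₁)) (e (E i₂)) := fun 𝒜 h𝒜 =>
      le_trans (h1 i₁ 𝒜 h𝒜) (h2' 𝒜 h𝒜)
    exact E_le_E ((he (E i₁) (E i₂)).2 hle)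
  simpa using Fintype.card_le_of_injective φ hinj

lemma pkset_zero_sub (t s : ↥(PkSet 0)) : t = s := by
  have huniv : (Finset.univ : Finset (Finset (Fin 0))) = {∅} := by
    apply Finset.eq_singleton_iff_unique_mem.2
    exact ⟨Finset.mem_univ _, fun a _ => Finset.eq_empty_of_forall_notMem fun x => x.elim0⟩
  have hval : ∀ (u : ↥(PkSet 0)), u.1 ∅ = 1 := by
    intro u
    have := u.2.2
    rwa [huniv, Finset.sum_singleton] at this
  apply Subtype.ext
  funext a
  have ha : a = ∅ := Finset.eq_empty_of_forall_notMem fun x => x.elim0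
  rw [ha, hval t, hval s]

lemma zero_case (hk' : 0 < k')
    (e : ↥(PkSet 0) ≃ ↥(PkSet k')) : False := by
  set i : Fin k' := ⟨0, hk'⟩
  have h1 : e.symm (E i) = e.symm ⟨dlt ∅, dlt_mem ∅⟩ := pkset_zero_sub _ _
  have h2 : E i = (⟨dlt ∅, dlt_mem ∅⟩ : ↥(PkSet k')) := e.symm.injective h1
  have h3 := congrArg (fun u : ↥(PkSet k') => u.1 ({i} : Finset (Fin k'))) h2
  simp only [E, dlt, if_pos rfl] at h3
  rw [if_neg (Finset.singleton_ne_empty i)] at h3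
  norm_num at h3

end Stmt5Aux

open Stmt5Aux

theorem stmt5 (k k' : ℕ) (h : k ≠ k') :
    ¬ ∃ e : ↥(PkSet k) ≃ ↥(PkSet k'),
        ∀ t s : ↥(PkSet k), PkLe t s ↔ PkLe (e t) (e s) := by
  rintro ⟨e, he⟩
  have he' : ∀ t s, PkLe t s ↔ PkLe (e.symm t) (e.symm s) := fun t s => by
    rw [he (e.symm t) (e.symm s), e.apply_symm_apply, e.apply_symm_apply]
  rcases Nat.eq_zero_or_pos k with hk | hk
  · subst hk
    have hk' : 0 < k' := Nat.pos_of_ne_zero (Ne.symm h)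
    exact zero_case hk' e
  rcases Nat.eq_zero_or_pos k' with hk' | hk'
  · subst hk'
    exact zero_case hk e.symm
  · exact h (le_antisymm (card_le hk hk' e he) (card_le hk' hk e.symm he'))
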